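/- arXiv:1307.5377 — 4 statements merged into one kernel-verified Lean document; each statement's English description precedes it below -/
import Mathlib

section
/- Let (A,λ,L) and (A',λ',L) be Pom_L-bisimilar labelled asynchronous systems. Then for every event a₁ ∈ E such that s₀·a₁ is defined, there exists an event a₁' ∈ E' such that s₀'·a₁' is defined and the labelled asynchronous systems (A(s₀·a₁),λ,L) and (A'(s₀'·a₁'),λ',L) are Pom_L-bisimilar. -/
/-- An asynchronous (transition) system: a state space with an initial state,
in which every event occurs in at least one transition. -/
structure AsyncSystem (S E : Type) where
  init : S
  indep : E → E → Prop
  tran : S → E → S → Prop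
  indep_symm : ∀ a b, indep a b → indep b a
  indep_irrefl : ∀ a, ¬ indep a a
  det : ∀ s a s' s'', tran s a s' → tran s a s'' → s' = s''
  diamond : ∀ a b s s' s'', indep a b → tran s a s' → tran s' b s'' →
    ∃ s₁, tran s b s₁ ∧ tran s₁ a s''
  event_occurs : ∀ e, ∃ s₁ s₂, tran s₁ e s₂

/-- A state is reachable if there is a finite sequence of transitions from the
initial state to it. -/
def AsyncSystem.Reachable {S E : Type} (A : AsyncSystem S E) (s : S) : Prop :=
  Relation.ReflTransGen (fun x y => ∃ e, A.tran x e y) A.init s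

/-- `A.rebase s` is the asynchronous system `A(s)`: `A` with initial state replaced by `s`. -/
def AsyncSystem.rebase {S E : Type} (A : AsyncSystem S E) (s : S) : AsyncSystem S E :=
  { A with init := s }

/-- `A.Exec s w t` means `s · w = t`: the word `w` can be executed from `s`, ending in `t`. -/
def AsyncSystem.Exec {S E : Type} (A : AsyncSystem S E) : S → List E → S → Prop
  | s, [], t => s = t
  | s, e :: w, t => ∃ u, A.tran s e u ∧ A.Exec u w t

/-- A morphism of asynchronous systems with a total event map `η`. -/
def IsMorphism {S E S' E' : Type} (A : AsyncSystem S E) (A' : AsyncSystem S' E')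
    (σ : S → S') (η : E → E') : Prop :=
  σ A.init = A'.init ∧
  (∀ s₁ e s₂, A.tran s₁ e s₂ → A'.tran (σ s₁) (η e) (σ s₂)) ∧
  (∀ e₁ e₂, A.indep e₁ e₂ → A'.indep (η e₁) (η e₂))

/-- An open morphism of asynchronous systems (its event map is total). -/
def IsOpenMorphism {S E S' E' : Type} (A : AsyncSystem S E) (A' : AsyncSystem S' E')
    (σ : S → S') (η : E → E') : Prop :=
  IsMorphism A A' σ η ∧
  (∀ s e' u', A'.tran (σ s) e' u' → ∃ e u, A.tran s e u ∧ η e = e' ∧ σ u = u') ∧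
  (∀ s, A.Reachable s → ∀ e₁ e₂ u v, A.tran s e₁ u → A.tran u e₂ v →
    A'.indep (η e₁) (η e₂) → A.indep e₁ e₂)

/-- A `Pom_L`-open morphism of labelled asynchronous systems: an open morphism
preserving labels. -/
def IsPomOpen {S E S' E' L : Type} (A : AsyncSystem S E) (lab : E → L)
    (A' : AsyncSystem S' E') (lab' : E' → L) (σ : S → S') (η : E → E') : Prop :=
  IsOpenMorphism A A' σ η ∧ ∀ e, lab' (η e) = lab e

/-- Two labelled asynchronous systems are `Pom_L`-bisimilar if there is a third labelled
asynchronous system with `Pom_L`-open morphisms to each of them. -/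
def Bisimilar {S E S' E' L : Type} (A : AsyncSystem S E) (lab : E → L)
    (A' : AsyncSystem S' E') (lab' : E' → L) : Prop :=
  ∃ (S'' E'' : Type) (A'' : AsyncSystem S'' E'') (lab'' : E'' → L)
    (σ : S'' → S) (η : E'' → E) (σ' : S'' → S') (η' : E'' → E'),
    IsPomOpen A'' lab'' A lab σ η ∧ IsPomOpen A'' lab'' A' lab' σ' η'

/-- `Qn A n`: pairs of a reachable state `s` and an `n`-tuple of pairwise independent
events executable from `s`.  For `n = 0` this is the set of reachable states. -/
def Qn {S E : Type} (A : AsyncSystem S E) (n : ℕ) : Set (S × (Fin n → E)) :=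
  {p | A.Reachable p.1 ∧ (∃ t, A.Exec p.1 (List.ofFn p.2) t) ∧
    ∀ i j : Fin n, i < j → A.indep (p.2 i) (p.2 j)}

/-- The vertex set `λ⁺E` of the simplicial scheme of a labelled asynchronous system. -/
def VertexSet {S E L : Type} (A : AsyncSystem S E) (lab : E → L) : Set L :=
  {l | ∃ (a : E) (s u : S), A.Reachable s ∧ A.tran s a u ∧ lab a = l}

/-- The simplices of the simplicial scheme of a labelled asynchronous system:
finite nonempty sets `{λ(a₁), …, λ(a_k)}` (`k ≥ 1`) where the `aᵢ` are pairwise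
independent and `s · a₁ ⋯ a_k` is defined for some reachable state `s`. -/
def Simplices {S E L : Type} (A : AsyncSystem S E) (lab : E → L) : Set (Set L) :=
  {X | ∃ (k : ℕ) (a : Fin (k + 1) → E) (s : S),
    A.Reachable s ∧
    (∀ i j, i < j → A.indep (a i) (a j)) ∧
    (∃ t, A.Exec s (List.ofFn a) t) ∧
    X = Set.range fun i => lab (a i)}

/-- Rebasing along an open morphism. -/
lemma pomOpen_rebase {S E S' E' L : Type} {A : AsyncSystem S E} {lab : E → L}
    {A' : AsyncSystem S' E'} {lab' : E' → L} {σ : S → S'} {η : E → E'}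
    (h : IsPomOpen A lab A' lab' σ η) {s : S} (hs : A.Reachable s) :
    IsPomOpen (A.rebase s) lab (A'.rebase (σ s)) lab' σ η := by
  obtain ⟨⟨⟨_, htran, hind⟩, hlift, hrefl⟩, hlab⟩ := h
  refine ⟨⟨⟨rfl, htran, hind⟩, hlift, ?_⟩, hlab⟩
  intro t hreach e₁ e₂ u v h1 h2 hi
  exact hrefl t (hs.trans hreach) e₁ e₂ u v h1 h2 hi

/-- if `(A, λ, L)` and `(A', λ', L)` are `Pom_L`-bisimilar, then for every
event `a₁` with `s₀ · a₁` defined there is an event `a₁'` with `s₀' · a₁'` defined such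
that `(A(s₀ · a₁), λ, L)` and `(A'(s₀' · a₁'), λ', L)` are `Pom_L`-bisimilar. -/
theorem bisimilar_step {S E S' E' L : Type}
    (A : AsyncSystem S E) (lab : E → L) (A' : AsyncSystem S' E') (lab' : E' → L)
    (h : Bisimilar A lab A' lab')
    (a₁ : E) (s₁ : S) (ha : A.tran A.init a₁ s₁) :
    ∃ (a₁' : E') (s₁' : S'), A'.tran A'.init a₁' s₁' ∧
      Bisimilar (A.rebase s₁) lab (A'.rebase s₁') lab' := by
  obtain ⟨S'', E'', A'', lab'', σ, η, σ', η', h1, h2⟩ := h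
  have hinit : σ A''.init = A.init := h1.1.1.1
  obtain ⟨e, u, hto, heq, hsu⟩ := h1.1.2.1 A''.init a₁ s₁ (by rw [hinit]; exact ha)
  have hru : A''.Reachable u := Relation.ReflTransGen.single ⟨e, hto⟩
  refine ⟨η' e, σ' u, by rw [← h2.1.1.1]; exact h2.1.1.2.1 _ _ _ hto,
    S'', E'', A''.rebase u, lab'', σ, η, σ', η', ?_, pomOpen_rebase h2 hru⟩
  have := pomOpen_rebase h1 hru
  rwa [hsu] at this
end

section
/- If (σ,η): A → A' is an open morphism of asynchronous systems, then for every n ≥ 0 the induced map Q_n(σ,η): Q_n(A) → Q_n(A'), given by (s,e₁,…,e_n) ↦ (σ(s),η(e₁),…,η(e_n)), is surjective. -/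
section Aux

variable {S E S' E' : Type}

lemma exec_append_split (A : AsyncSystem S E) :
    ∀ (w₁ w₂ : List E) (s t : S), A.Exec s (w₁ ++ w₂) t →
      ∃ u, A.Exec s w₁ u ∧ A.Exec u w₂ t := by
  intro w₁
  induction w₁ with
  | nil => intro w₂ s t h; exact ⟨s, rfl, h⟩
  | cons a w ih =>
    intro w₂ s t h
    obtain ⟨m, hm, hrest⟩ := h
    obtain ⟨u, h1, h2⟩ := ih w₂ m t hrest
    exact ⟨u, ⟨m, hm, h1⟩, h2⟩

lemma exec_commute (A : AsyncSystem S E) (x : E) :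
    ∀ (w : List E) (u v v2 : S), A.Exec u w v → A.tran v x v2 →
      (∀ a ∈ w, A.indep a x) → ∃ u2, A.tran u x u2 ∧ A.Exec u2 w v2 := by
  intro w
  induction w with
  | nil => intro u v v2 h hx _; cases h; exact ⟨v2, hx, rfl⟩
  | cons a w ih =>
    intro u v v2 h hx hind
    obtain ⟨m, hm, hrest⟩ := h
    obtain ⟨m2, hm2, hexec⟩ := ih m v v2 hrest hx (fun b hb => hind b (List.mem_cons_of_mem _ hb))
    obtain ⟨u2, hu2, hu2a⟩ := A.diamond a x u m m2 (hind a List.mem_cons_self) hm hm2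
    exact ⟨u2, hu2, m2, hu2a, hexec⟩

lemma exec_pairwise (A : AsyncSystem S E) (A' : AsyncSystem S' E')
    (σ : S → S') (η : E → E') (hopen : IsOpenMorphism A A' σ η) :
    ∀ (w : List E) (s t : S), A.Reachable s → A.Exec s w t →
      List.Pairwise (fun a b => A'.indep (η a) (η b)) w → List.Pairwise A.indep w := by
  intro w
  induction w with
  | nil => intro s t _ _ _; exact List.Pairwise.nil
  | cons a w ih =>
    intro s t hs hexec hp
    obtain ⟨u, hu, hrest⟩ := hexec
    have hu_reach : A.Reachable u := hs.tail ⟨a, hu⟩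
    obtain ⟨hp1, hp2⟩ := List.pairwise_cons.mp hp
    have hw : List.Pairwise A.indep w := ih u t hu_reach hrest hp2
    refine List.pairwise_cons.mpr ⟨fun b hb => ?_, hw⟩
    obtain ⟨w₁, w₂, rfl⟩ := List.append_of_mem hb
    obtain ⟨v, hv1, hv2⟩ := exec_append_split A w₁ (b :: w₂) u t hrest
    obtain ⟨v2, hvb, _⟩ := hv2
    have hind1 : ∀ c ∈ w₁, A.indep c b := by
      rw [List.pairwise_append] at hw
      exact fun c hc => hw.2.2 c hc b List.mem_cons_self
    obtain ⟨u2, hu2, _⟩ := exec_commute A b w₁ u v v2 hv1 hvb hind1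
    exact hopen.2.2 s hs a b u u2 hu hu2 (hp1 b hb)

lemma reach_lift (A : AsyncSystem S E) (A' : AsyncSystem S' E')
    (σ : S → S') (η : E → E') (hopen : IsOpenMorphism A A' σ η) :
    ∀ s', A'.Reachable s' → ∃ s, A.Reachable s ∧ σ s = s' := by
  intro s' h
  induction h with
  | refl => exact ⟨A.init, Relation.ReflTransGen.refl, hopen.1.1⟩
  | tail _ hstep ih =>
    obtain ⟨s, hs, rfl⟩ := ih
    obtain ⟨e', he'⟩ := hstep
    obtain ⟨e, u, heu, _, rfl⟩ := hopen.2.1 s e' _ he'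
    exact ⟨u, hs.tail ⟨e, heu⟩, rfl⟩

lemma word_lift (A : AsyncSystem S E) (A' : AsyncSystem S' E')
    (σ : S → S') (η : E → E') (hopen : IsOpenMorphism A A' σ η) :
    ∀ (w' : List E') (s : S) (t' : S'), A'.Exec (σ s) w' t' →
      ∃ (w : List E) (t : S), A.Exec s w t ∧ w.map η = w' := by
  intro w'
  induction w' with
  | nil => intro s t' _; exact ⟨[], s, rfl, rfl⟩
  | cons e' w' ih =>
    intro s t' h
    obtain ⟨u', hu', hrest⟩ := h
    obtain ⟨e, u, heu, he, hσu⟩ := hopen.2.1 s e' u' hu'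
    obtain ⟨w, t, hw, hmap⟩ := ih u t' (hσu ▸ hrest)
    exact ⟨e :: w, t, ⟨u, heu, hw⟩, by simp [hmap, he]⟩

end Aux

/-- for an open morphism `(σ, η) : A → A'`, the induced map
`Q_n(σ, η) : Q_n(A) → Q_n(A')`, `(s, e₁, …, e_n) ↦ (σ s, η e₁, …, η e_n)`,
is surjective for every `n ≥ 0`. -/
theorem Qn_surjective {S E S' E' : Type}
    (A : AsyncSystem S E) (A' : AsyncSystem S' E') (σ : S → S') (η : E → E')
    (hopen : IsOpenMorphism A A' σ η) (n : ℕ) :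
    Set.SurjOn (fun p : S × (Fin n → E) => (σ p.1, fun i => η (p.2 i)))
      (Qn A n) (Qn A' n) := by
  rintro ⟨s', e'⟩ ⟨hreach', hexec', hind'⟩
  obtain ⟨s, hs, rfl⟩ := reach_lift A A' σ η hopen s' hreach'
  obtain ⟨t', hexec'⟩ := hexec'
  obtain ⟨w, t, hw, hmap⟩ := word_lift A A' σ η hopen (List.ofFn e') s t' hexec'
  have hlen : w.length = n := by
    have := congrArg List.length hmap
    simpa using this
  set e : Fin n → E := fun i => w.get (Fin.cast hlen.symm i) with he_def
  have hofn : List.ofFn e = w := by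
    apply List.ext_get
    · simp [hlen]
    · intro i h1 h2
      simp only [he_def, List.get_ofFn]
      congr 1
  have hηe : ∀ i : Fin n, η (e i) = e' i := by
    intro i
    have h2 := List.get_of_eq hmap (Fin.cast (by simp [hlen]) i)
    simpa [he_def] using h2
  have hpair' : List.Pairwise (fun a b => A'.indep (η a) (η b)) w := by
    rw [← hofn] at hmap ⊢
    rw [List.pairwise_ofFn]
    intro i j hij
    rw [hηe i, hηe j]
    exact hind' i j hij
  have hpair : List.Pairwise A.indep w :=
    exec_pairwise A A' σ η hopen w s t hs hw hpair'
  refine ⟨⟨s, e⟩, ⟨hs, ⟨t, hofn ▸ hw⟩, ?_⟩, ?_⟩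
  · rw [← hofn] at hpair
    rw [List.pairwise_ofFn] at hpair
    exact fun i j hij => hpair hij
  · simp only [Prod.mk.injEq]
    exact ⟨trivial, funext hηe⟩
end

section
/- If (σ,η): A → A' is an open morphism of asynchronous systems, then for every reachable state s ∈ S and every n ≥ 0, the induced map Q_n(A(s)) → Q_n(A'(σ(s))), given by (t,e₁,…,e_n) ↦ (σ(t),η(e₁),…,η(e_n)), is surjective. -/
section Aux

variable {S E S' E' : Type} {A : AsyncSystem S E} {A' : AsyncSystem S' E'}
  {σ : S → S'} {η : E → E'}

lemma lift_exec (hopen : IsOpenMorphism A A' σ η) :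
    ∀ (w' : List E') (u : S) (t' : S'), A'.Exec (σ u) w' t' →
      ∃ (w : List E) (t : S), A.Exec u w t ∧ w.map η = w' ∧ σ t = t' := by
  intro w'
  induction w' with
  | nil => intro u t' h; exact ⟨[], u, rfl, rfl, h⟩
  | cons e' w' ih =>
    intro u t' h
    obtain ⟨u', hu', hexec⟩ := h
    obtain ⟨e, v, hev, hηe, hσv⟩ := hopen.2.1 u e' u' hu'
    obtain ⟨w, t, hwt, hmap, hσt⟩ := ih v t' (hσv ▸ hexec)
    exact ⟨e :: w, t, ⟨v, hev, hwt⟩, by simp [hηe, hmap], hσt⟩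

lemma lift_reach (hopen : IsOpenMorphism A A' σ η) (s : S) (t' : S')
    (h : Relation.ReflTransGen (fun x y => ∃ e, A'.tran x e y) (σ s) t') :
    ∃ t, Relation.ReflTransGen (fun x y => ∃ e, A.tran x e y) s t ∧ σ t = t' := by
  induction h with
  | refl => exact ⟨s, Relation.ReflTransGen.refl, rfl⟩
  | tail _ hstep ih =>
    obtain ⟨m, hm, hσm⟩ := ih
    obtain ⟨e', he'⟩ := hstep
    obtain ⟨e, t, het, _, hσt⟩ := hopen.2.1 m e' _ (hσm ▸ he')
    exact ⟨t, hm.tail ⟨e, het⟩, hσt⟩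

lemma reach_tran (hu : A.Reachable u) (h : A.tran u e v) : A.Reachable v :=
  hu.tail ⟨e, h⟩

lemma head_indep (hopen : IsOpenMorphism A A' σ η) (e : E) :
    ∀ (w : List E) (u v : S), A.Reachable u → A.Exec u (e :: w) v →
      (∀ f ∈ w, A'.indep (η e) (η f)) → ∀ f ∈ w, A.indep e f := by
  intro w
  induction w with
  | nil => intro _ _ _ _ _ f hf; exact absurd hf (List.not_mem_nil (a := f))
  | cons g w ih =>
    intro u v hu hexec hηind f hf
    obtain ⟨u₁, he, u₂, hg, hw⟩ := hexec
    have heg : A.indep e g :=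
      hopen.2.2 u hu e g u₁ u₂ he hg (hηind g (List.mem_cons_self (a := g) (l := w)))
    rcases List.mem_cons.mp hf with rfl | hf'
    · exact heg
    · obtain ⟨x, hx1, hx2⟩ := A.diamond e g u u₁ u₂ heg he hg
      have hxr : A.Reachable x := reach_tran hu hx1
      exact ih x v hxr ⟨u₂, hx2, hw⟩ (fun f hf => hηind f (List.mem_cons_of_mem g hf)) f hf'

lemma pairwise_indep (hopen : IsOpenMorphism A A' σ η) :
    ∀ (w : List E) (u v : S), A.Reachable u → A.Exec u w v →
      (w.map η).Pairwise A'.indep → w.Pairwise A.indep := by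
  intro w
  induction w with
  | nil => intro _ _ _ _ _; exact List.Pairwise.nil
  | cons e w ih =>
    intro u v hu hexec hp
    obtain ⟨u₁, he, hw⟩ := hexec
    rw [List.map_cons, List.pairwise_cons] at hp
    refine List.Pairwise.cons ?_ (ih u₁ v (reach_tran hu he) hw hp.2)
    exact head_indep hopen e w u v hu ⟨u₁, he, hw⟩
      (fun f hf => hp.1 (η f) (List.mem_map_of_mem (f := η) hf))

lemma rebase_exec (s : S) : ∀ (w : List E) (u t : S),
    (A.rebase s).Exec u w t ↔ A.Exec u w t := by
  intro w
  induction w with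
  | nil => intro u t; exact Iff.rfl
  | cons e w ih =>
    intro u t
    exact exists_congr fun x => and_congr Iff.rfl (ih x t)

end Aux

/-- for an open morphism `(σ, η) : A → A'` and every reachable state `s`
of `A`, the induced maps `Q_n(A(s)) → Q_n(A'(σ s))` are surjective for all `n ≥ 0`. -/
theorem Qn_rebase_surjective {S E S' E' : Type}
    (A : AsyncSystem S E) (A' : AsyncSystem S' E') (σ : S → S') (η : E → E')
    (hopen : IsOpenMorphism A A' σ η) (s : S) (hs : A.Reachable s) (n : ℕ) :
    Set.SurjOn (fun p : S × (Fin n → E) => (σ p.1, fun i => η (p.2 i)))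
      (Qn (A.rebase s) n) (Qn (A'.rebase (σ s)) n) := by
  rintro ⟨t', f'⟩ ⟨hr', ⟨v', hexec'⟩, hind'⟩
  obtain ⟨t, hts, hσt⟩ := lift_reach hopen s t' hr'
  obtain ⟨w, tend, hwt, hmap, _⟩ :=
    lift_exec hopen (List.ofFn f') t v' (by rw [hσt]; exact (rebase_exec (σ s) _ _ _).mp hexec')
  have hlen : w.length = n := by
    have := congrArg List.length hmap
    simpa using this
  let e : Fin n → E := fun i => w[i]'(by omega)
  have hofn : List.ofFn e = w := by
    apply List.ext_getElem
    · simp [hlen]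
    · intro i h1 h2
      simp [e]
  have htA : A.Reachable t := hs.trans hts
  have hpw : w.Pairwise A.indep := by
    apply pairwise_indep hopen w t tend htA hwt
    rw [hmap, List.pairwise_ofFn]
    exact fun i j hij => hind' i j hij
  refine ⟨(t, e), ⟨hts, ⟨tend, by rw [hofn]; exact (rebase_exec s w t tend).mpr hwt⟩, ?_⟩, ?_⟩
  · rw [← List.pairwise_ofFn, hofn]
    exact hpw
  · have hmap' : ∀ i : Fin n, η (e i) = f' i := by
      intro i
      have h1 := List.getElem_of_eq hmap (by simp [hlen] : (i:ℕ) < (w.map η).length)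
      simpa [e] using h1
    simp only [Prod.mk.injEq]
    exact ⟨hσt, funext hmap'⟩
end

section
/- The converse of the surjectivity property fails: there exist asynchronous systems A and A' and a morphism (σ,η): A → A' with η total such that Q_n(σ,η) is surjective for every n ≥ 0, but (σ,η) is not open. Concretely, take A with S = {s₀}, E = {a,b,c}, I = {(a,b),(b,a)}, Tran = {(s₀,e,s₀) : e ∈ E}, and A' with S' = {s₀'}, E' = {a',b'}, I' = {(a',b'),(b',a')}, Tran' = {(s₀',e',s₀') : e' ∈ E'}, with σ(s₀) = s₀', η(a) = η(c) = a', η(b) = b'; then (η(b),η(c)) ∈ I' but (b,c) ∉ I, so (σ,η) is not open, yet all Q_n(σ,η) are surjective. -/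

def cexA : AsyncSystem Unit (Fin 3) where
  init := ()
  indep := fun x y => (x = 0 ∧ y = 1) ∨ (x = 1 ∧ y = 0)
  tran := fun _ _ _ => True
  indep_symm := by decide
  indep_irrefl := by decide
  det := fun _ _ _ _ _ _ => rfl
  diamond := fun _ _ _ _ _ _ _ _ => ⟨(), trivial, trivial⟩
  event_occurs := fun _ => ⟨(), (), trivial⟩

def cexA' : AsyncSystem Unit (Fin 2) where
  init := ()
  indep := fun x y => x ≠ y
  tran := fun _ _ _ => True
  indep_symm := fun _ _ h => h.symm
  indep_irrefl := fun _ h => h rfl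
  det := fun _ _ _ _ _ _ => rfl
  diamond := fun _ _ _ _ _ _ _ _ => ⟨(), trivial, trivial⟩
  event_occurs := fun _ => ⟨(), (), trivial⟩

lemma cex_exec (w : List (Fin 3)) : cexA.Exec () w () := by
  induction w with
  | nil => rfl
  | cons e w ih => exact ⟨(), trivial, ih⟩

def cexL : Fin 2 → Fin 3 := ![0, 1]
def cexEta : Fin 3 → Fin 2 := ![0, 1, 0]

/-- the converse of the surjectivity property fails: there are asynchronous
systems `A`, `A'` and a morphism `(σ, η)` with total event map such that all induced maps
`Q_n(σ, η)` are surjective, but `(σ, η)` is not open. -/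
theorem surjective_not_open :
    ∃ (S E S' E' : Type) (A : AsyncSystem S E) (A' : AsyncSystem S' E')
      (σ : S → S') (η : E → E'),
      IsMorphism A A' σ η ∧
      (∀ n : ℕ, Set.SurjOn (fun p : S × (Fin n → E) => (σ p.1, fun i => η (p.2 i)))
        (Qn A n) (Qn A' n)) ∧
      ¬ IsOpenMorphism A A' σ η := by
  refine ⟨Unit, Fin 3, Unit, Fin 2, cexA, cexA', fun _ => (), cexEta, ⟨rfl, ?_, ?_⟩, ?_, ?_⟩
  · exact fun _ _ _ _ => trivial
  · intro e₁ e₂ h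
    rcases h with ⟨rfl, rfl⟩ | ⟨rfl, rfl⟩ <;> (show _ ≠ _; decide)
  · intro n p hp
    refine ⟨((), fun i => cexL (p.2 i)), ⟨Relation.ReflTransGen.refl, ⟨(), cex_exec _⟩, ?_⟩, ?_⟩
    · intro i j hij
      have h := hp.2.2 i j hij
      revert h
      have : ∀ x y : Fin 2, cexA'.indep x y → cexA.indep (cexL x) (cexL y) := by
        unfold cexA' cexA cexL; decide
      exact this _ _
    · have huv : p.1 = () := rfl
      refine Prod.ext rfl ?_
      funext i
      show cexEta (cexL (p.2 i)) = p.2 i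
      have : ∀ x : Fin 2, cexEta (cexL x) = x := by decide
      exact this _
  · intro h
    have := h.2.2 () Relation.ReflTransGen.refl 1 2 () () trivial trivial (by show _ ≠ _; decide)
    revert this
    unfold cexA
    decide
end
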